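/- If f is a morphism on finite words over {1,3} such that f(1) begins with the letter 1, the lengths |f^k(1)| tend to infinity, and the σ-sequence w_σ equals lim_{k→∞} f^k(1), then |f(1)| ≡ 0 (mod 4). -/

import Mathlib

open List Filter

/-- `σ(n)`: writing `n = 2^t * (4s + σ)` with `σ ∈ {1,3}` and `2^t` the largest
power of 2 dividing `n`, return `σ` (junk value 0 at `n = 0`). -/
def sigma (n : ℕ) : ℕ := (ordCompl[2] n) % 4

/-- The σ-sequence as an infinite word: its `n`-th letter (0-based) is `σ(n+1)`. -/
def sigmaSeq (n : ℕ) : ℕ := sigma (n + 1)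

/-- A word over the alphabet {1,3}. -/
def Word13 (l : List ℕ) : Prop := ∀ a ∈ l, a = 1 ∨ a = 3

/-- A morphism on finite words over {1,3}. -/
def IsMorphism13 (f : List ℕ → List ℕ) : Prop :=
  (∀ u v, f (u ++ v) = f u ++ f v) ∧ ∀ l, Word13 l → Word13 (f l)

/-- The infinite word `s` is obtained by iterating the morphism `f` on the
letter 1: `f(1)` begins with 1, `|f^k(1)| → ∞`, and `s = lim f^k(1)`. -/
def IterLimit (f : List ℕ → List ℕ) (s : ℕ → ℕ) : Prop :=
  (∃ t, f [1] = 1 :: t) ∧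
  Tendsto (fun k => (f^[k] [1]).length) atTop atTop ∧
  ∀ k n, n < (f^[k] [1]).length → (f^[k] [1]).getD n 0 = s n

lemma sigma_odd (n : ℕ) (h : n % 2 = 1) : sigma n = n % 4 := by
  unfold sigma
  rw [Nat.factorization_eq_zero_of_not_dvd (by omega), pow_zero, Nat.div_one]

lemma sigma_two_mul (n : ℕ) : sigma (2 * n) = sigma n := by
  unfold sigma
  rw [Nat.ordCompl_mul]
  have h2 : ordCompl[2] 2 = 1 := by
    rw [Nat.Prime.factorization_self Nat.prime_two, pow_one]
  rw [h2, one_mul]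

lemma sigmaSeq0 : sigmaSeq 0 = 1 := by rw [sigmaSeq, sigma_odd 1 rfl]
lemma sigmaSeq1 : sigmaSeq 1 = 1 := by
  rw [sigmaSeq, show (1:ℕ)+1 = 2*1 from rfl, sigma_two_mul, sigma_odd 1 rfl]
lemma sigmaSeq2 : sigmaSeq 2 = 3 := by rw [sigmaSeq, sigma_odd 3 rfl]
lemma sigmaSeq5 : sigmaSeq 5 = 3 := by
  rw [sigmaSeq, show (5:ℕ)+1 = 2*3 from rfl, sigma_two_mul, sigma_odd 3 rfl]
lemma sigmaSeq6 : sigmaSeq 6 = 3 := by rw [sigmaSeq, sigma_odd 7 rfl]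

/-- If the σ-sequence is obtained by iterating a morphism `f`, then
`|f(1)| ≡ 0 (mod 4)`. -/
theorem sigma_morphism_length_mod_four
    (f : List ℕ → List ℕ) (hf : IsMorphism13 f) (hit : IterLimit f sigmaSeq) :
    (f [1]).length % 4 = 0 := by
  obtain ⟨hsplit, -⟩ := hf
  obtain ⟨⟨t, ht⟩, htend, hpre⟩ := hit
  have hpre1 : ∀ n < (f [1]).length, (f [1]).getD n 0 = sigmaSeq n := by
    intro n hn
    have := hpre 1 n (by simpa using hn)
    simpa using this
  have h2eq : f^[2] [1] = f (f [1]) := by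
    rw [show (2:ℕ) = 1+1 from rfl, Function.iterate_succ_apply', Function.iterate_one]
  have h3eq : f^[3] [1] = f (f^[2] [1]) := by
    rw [show (3:ℕ) = 2+1 from rfl, Function.iterate_succ_apply']
  rcases t with _ | ⟨b, r⟩
  · -- f [1] = [1] : contradiction with lengths → ∞
    exfalso
    have hiter : ∀ k, f^[k] [1] = [1] := by
      intro k
      induction k with
      | zero => rfl
      | succ k ih => rw [Function.iterate_succ_apply', ih, ht]
    obtain ⟨k, hk⟩ := (htend.eventually_ge_atTop 2).exists
    rw [hiter k] at hk
    simp at hk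
  · -- f [1] = 1 :: b :: r
    have hm2 : 2 ≤ (f [1]).length := by rw [ht]; simp
    have hb : b = 1 := by
      have h := hpre1 1 (by omega)
      rw [ht] at h
      simpa [sigmaSeq1] using h
    subst hb
    have hL12 : f [1] = [1] ++ ([1] ++ r) := by rw [ht]; rfl
    have hfL : f (f [1]) = f [1] ++ (f [1] ++ f r) := by
      conv_lhs => rw [hL12]
      rw [hsplit, hsplit]
    have hP2 : f^[2] [1] = f [1] ++ (f [1] ++ f r) := by rw [h2eq, hfL]
    set m := (f [1]).length with hm
    have hlen2 : (f^[2] [1]).length = m + (m + (f r).length) := by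
      rw [hP2]; simp; rfl
    have hshift : ∀ i, i < m → sigmaSeq (m + i) = sigmaSeq i := by
      intro i hi
      have hlt : m + i < (f^[2] [1]).length := by rw [hlen2]; omega
      have h := hpre 2 (m + i) hlt
      rw [hP2, List.getD_append_right _ _ _ _ (by omega)] at h
      have e : m + i - (f [1]).length = i := by omega
      rw [e, List.getD_append _ _ _ _ (by omega)] at h
      rw [← h, hpre1 i hi]
    by_contra hm4
    have hodd : ∀ j, j % 2 = 0 → sigmaSeq j = (j + 1) % 4 := by
      intro j hj
      rw [sigmaSeq, sigma_odd (j+1) (by omega)]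
    have hcases : m % 4 = 1 ∨ m % 4 = 2 ∨ m % 4 = 3 := by omega
    rcases hcases with h1 | h2 | h3
    · -- m % 4 = 1, so m ≥ 5 ; use i = 1
      have hv := hshift 1 (by omega)
      rw [sigmaSeq1, hodd (m+1) (by omega)] at hv
      omega
    · -- m % 4 = 2 ; use i = 0
      have hv := hshift 0 (by omega)
      simp only [Nat.add_zero] at hv
      rw [sigmaSeq0, hodd m (by omega)] at hv
      omega
    · by_cases hm3 : m = 3
      · -- the hard case m = 3
        -- determine f [1] = [1,1,3]
        rcases r with _ | ⟨c, r'⟩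
        · rw [ht] at hm; simp at hm; omega
        · have hr' : r' = [] := by
            have h3' : (1 :: 1 :: c :: r').length = 3 := by rw [← ht]; omega
            simp only [List.length_cons] at h3'
            exact List.length_eq_zero_iff.mp (by omega)
          subst hr'
          have hc : c = 3 := by
            have h := hpre1 2 (by omega)
            rw [ht] at h
            simpa [sigmaSeq2] using h
          subst hc
          have hLval : f [1] = [1, 1, 3] := ht
          have hL133 : f [1] = [1] ++ ([1] ++ [3]) := by rw [hLval]; rfl
          have hfL3 : f (f [1]) = f [1] ++ (f [1] ++ f [3]) := by
            conv_lhs => rw [hL133]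
            rw [hsplit, hsplit]
          have hP2' : f^[2] [1] = [1,1,3] ++ ([1,1,3] ++ f [3]) := by
            rw [h2eq, hfL3, hLval]
          have hf113 : f [1,1,3] = [1,1,3] ++ ([1,1,3] ++ f [3]) := by
            conv_lhs => rw [show ([1,1,3] : List ℕ) = [1] ++ ([1] ++ [3]) from rfl]
            rw [hsplit, hsplit, hLval]
          rcases hFe : f [3] with _ | ⟨a, tl⟩
          · -- f [3] = []
            have hP2n : f^[2] [1] = [1,1,3] ++ [1,1,3] := by rw [hP2', hFe]; simp
            have hP3 : f^[3] [1] =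
                ([1,1,3] ++ ([1,1,3] ++ ([] : List ℕ))) ++
                  ([1,1,3] ++ ([1,1,3] ++ ([] : List ℕ))) := by
              rw [h3eq, hP2n, hsplit, hf113, hFe]
            have h6 := hpre 3 6 (by rw [hP3]; simp)
            rw [hP3] at h6
            rw [sigmaSeq6] at h6
            exact absurd h6 (by decide)
          · -- f [3] = a :: tl
            have ha : a = 3 := by
              have h := hpre 2 6 (by rw [hP2', hFe]; simp)
              rw [hP2', hFe] at h
              simpa [sigmaSeq6] using h
            subst ha
            have hftl : f (3 :: tl) = (3 :: tl) ++ f tl := by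
              rw [show (3 :: tl : List ℕ) = [3] ++ tl from rfl, hsplit, hFe]
              simp
            set A : List ℕ := [1,1,3] ++ ([1,1,3] ++ (3 :: tl)) with hA
            set q := tl.length with hq
            have hAlen : A.length = 7 + q := by rw [hA]; simp; omega
            have hP3 : f^[3] [1] = A ++ (A ++ ((3 :: tl) ++ f tl)) := by
              rw [h3eq, hP2', hsplit, hsplit, hf113, hFe, hftl, hA]
            have hlen3 : 15 + 3 * q ≤ (f^[3] [1]).length := by
              rw [hP3]
              simp only [List.length_append, hAlen, List.length_cons]
              omega
            -- position 8+q : letter 1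
            have hi1 := hpre 3 (8 + q) (by omega)
            rw [hP3, List.getD_append_right _ _ _ _ (by rw [hAlen]; omega)] at hi1
            rw [show 8 + q - A.length = 1 by rw [hAlen]; omega] at hi1
            rw [List.getD_append _ _ _ _ (by rw [hAlen]; omega)] at hi1
            have hA1 : A.getD 1 0 = 1 := by rw [hA]; rfl
            rw [hA1] at hi1
            -- position 10+q : letter 1
            have hi2 := hpre 3 (10 + q) (by omega)
            rw [hP3, List.getD_append_right _ _ _ _ (by rw [hAlen]; omega)] at hi2
            rw [show 10 + q - A.length = 3 by rw [hAlen]; omega] at hi2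
            rw [List.getD_append _ _ _ _ (by rw [hAlen]; omega)] at hi2
            have hA3 : A.getD 3 0 = 1 := by rw [hA]; rfl
            rw [hA3] at hi2
            -- position 14+2q : letter 3
            have hi3 := hpre 3 (14 + 2 * q) (by omega)
            rw [hP3, List.getD_append_right _ _ _ _ (by rw [hAlen]; omega)] at hi3
            rw [show 14 + 2 * q - A.length = 7 + q by rw [hAlen]; omega] at hi3
            rw [List.getD_append_right _ _ _ _ hAlen.le] at hi3
            rw [show 7 + q - A.length = 0 by rw [hAlen]; omega] at hi3
            simp at hi3
            rcases Nat.even_or_odd q with hqe | hqo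
            · -- q even : positions 9+q and 11+q both odd, both letters 1
              have hq2 : q % 2 = 0 := Nat.even_iff.mp hqe
              rw [hodd (8 + q) (by omega)] at hi1
              rw [hodd (10 + q) (by omega)] at hi2
              omega
            · -- q odd : position 15+2q, letter 3 but σ = 1
              have hq2 : q % 2 = 1 := Nat.odd_iff.mp hqo
              rw [hodd (14 + 2 * q) (by omega)] at hi3
              omega
      · -- m % 4 = 3, m ≥ 7 ; use i = 5
        have hv := hshift 5 (by omega)
        rw [sigmaSeq5, hodd (m+5) (by omega)] at hv
        omega
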